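/- Let n ≥ 3 be an integer. Let f, g ∈ S_r(ℝ^{n-1} × ℝ^{n-1}) and let 𝐟, 𝐠 : ℝ^{n-1} × [0,∞) → ℝ be the functions with f(x, y) = 𝐟(x, |y|) and g(x, y) = 𝐠(x, |y|). Then ∫_{ℝ^{n-1}} ∫_0^∞ 𝒞𝐟(u, s) 𝐠(u, s) s^{n-2} ds du = ∫_{ℝ^{n-1}} ∫_0^∞ 𝐟(x, z) 𝒞𝐠(x, z) z^{n-2} dz dx. -/

import Mathlib

open MeasureTheory Complex
open scoped Real
open Set Metric

noncomputable section

/-- `ℝ^{n-1}` as a Euclidean space. -/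
abbrev Euc (n : ℕ) := EuclideanSpace ℝ (Fin (n - 1))

/-- `f` belongs to `S_r(ℝ^{n-1} × ℝ^{n-1})`: it is a Schwartz function which is
radial in the second variable. -/
def IsSr (n : ℕ) (f : Euc n × Euc n → ℝ) : Prop :=
  (∃ g : SchwartzMap (Euc n × Euc n) ℝ, ⇑g = f) ∧
  ∀ (U : Euc n ≃ₗᵢ[ℝ] Euc n) (x y : Euc n), f (x, U y) = f (x, y)

/-- The cone transform `Cf(u,v) = ∫ f(u + |v|y, y) dy`. -/
def coneT (n : ℕ) (f : Euc n × Euc n → ℝ) : Euc n × Euc n → ℝ :=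
  fun p => ∫ y : Euc n, f (p.1 + ‖p.2‖ • y, y)

/-- The cone transform `𝒞𝐟(u,s) = ∫_{S^{n-2}} ∫_0^∞ 𝐟(u + zsθ, z) z^{n-2} dz dS(θ)`,
where the sphere `S^{n-2} ⊂ ℝ^{n-1}` carries its standard surface measure. -/
def coneTS (n : ℕ) (F : Euc n × ℝ → ℝ) (u : Euc n) (s : ℝ) : ℝ :=
  ∫ θ : Metric.sphere (0 : Euc n) 1,
    (∫ z in Set.Ioi (0 : ℝ), F (u + (z * s) • (θ : Euc n), z) * z ^ (n - 2))
    ∂(volume : Measure (Euc n)).toSphere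

variable {n : ℕ}

lemma euc_dim (n : ℕ) : Module.finrank ℝ (Euc n) = n - 1 := finrank_euclideanSpace_fin

lemma euc_nontrivial (hn : 3 ≤ n) : Nontrivial (Euc n) := by
  rw [← Module.finrank_pos_iff (R := ℝ), euc_dim]; omega

/-- weight on vectors -/
def wv (n : ℕ) : Euc n → ℝ := fun x => ((1 + ‖x‖) ^ n)⁻¹

/-- weight on the line -/
def wr : ℝ → ℝ := fun t => ((1 + |t|) ^ 2)⁻¹

lemma wv_nonneg (x : Euc n) : 0 ≤ wv n x := by
  rw [wv]; positivity

lemma wv_le_one (x : Euc n) : wv n x ≤ 1 := by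
  rw [wv]
  have h1 : (1:ℝ) ≤ (1 + ‖x‖) ^ n := one_le_pow₀ (by linarith [norm_nonneg x])
  exact inv_le_one_of_one_le₀ h1

lemma wv_pos (x : Euc n) : 0 < wv n x := by rw [wv]; positivity

lemma continuous_wv : Continuous (wv n) := by
  apply Continuous.inv₀ (by fun_prop)
  intro x; positivity

lemma wr_nonneg (t : ℝ) : 0 ≤ wr t := by rw [wr]; positivity

lemma continuous_wr : Continuous wr := by
  apply Continuous.inv₀ (by fun_prop)
  intro x; positivity

lemma integrable_wv (hn : 3 ≤ n) : Integrable (wv n) (volume : Measure (Euc n)) := by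
  have h : ((Module.finrank ℝ (Euc n) : ℝ)) < (n : ℝ) := by
    rw [euc_dim]; exact_mod_cast Nat.sub_lt (by omega) one_pos
  refine (integrable_one_add_norm (E := Euc n) (μ := volume) h).congr ?_
  refine ae_of_all _ fun x => ?_
  dsimp only
  rw [Real.rpow_neg (by positivity), Real.rpow_natCast, wv]

lemma integrable_wr : Integrable wr (volume : Measure ℝ) := by
  have h : ((Module.finrank ℝ ℝ : ℝ)) < (2 : ℝ) := by
    rw [Module.finrank_self]; norm_num
  refine (integrable_one_add_norm (E := ℝ) (μ := volume) h).congr ?_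
  refine ae_of_all _ fun x => ?_
  dsimp only
  rw [show ((2:ℝ)) = ((2:ℕ):ℝ) by norm_num, Real.rpow_neg (by positivity),
    Real.rpow_natCast, wr, Real.norm_eq_abs]

lemma pow_weight_bound (hn : 3 ≤ n) {z : ℝ} (hz : 0 < z) :
    ((1 + z) ^ n)⁻¹ * z ^ (n - 2) ≤ wr z := by
  have h1 : (0:ℝ) < (1 + z) ^ n := by positivity
  have h2 : (0:ℝ) < (1 + z) ^ 2 := by positivity
  have key : z ^ (n-2) * (1 + z) ^ 2 ≤ (1 + z) ^ n := by
    calc z ^ (n-2) * (1 + z) ^ 2 ≤ (1 + z) ^ (n-2) * (1 + z) ^ 2 :=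
          mul_le_mul_of_nonneg_right (pow_le_pow_left₀ hz.le (by linarith) _) h2.le
      _ = (1 + z) ^ n := by rw [← pow_add]; congr 1; omega
  rw [wr, _root_.abs_of_pos hz, inv_mul_eq_div, inv_eq_one_div, div_le_div_iff₀ h1 h2, one_mul]
  calc z ^ (n-2) * (1 + z) ^ 2 ≤ (1+z)^n := key

/-- decay of a Schwartz function on the product space -/
lemma schwartz_decay (n : ℕ) (φ : SchwartzMap (Euc n × Euc n) ℝ) :
    ∃ C, 0 ≤ C ∧ ∀ x y : Euc n, |φ (x, y)| ≤ C * (wv n x * wv n y) := by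
  set C : ℝ := 2 ^ (2*n) *
    ((Finset.Iic ((2*n : ℕ), (0:ℕ))).sup (fun m => SchwartzMap.seminorm ℝ m.1 m.2)) φ with hC
  have hC0 : 0 ≤ C := by
    apply mul_nonneg (by positivity)
    exact apply_nonneg _ _
  refine ⟨C, hC0, fun x y => ?_⟩
  have key := SchwartzMap.one_add_le_sup_seminorm_apply (𝕜 := ℝ) (m := ((2*n : ℕ), (0:ℕ)))
    (k := 2*n) (n := 0) le_rfl le_rfl φ (x, y)
  rw [norm_iteratedFDeriv_zero] at key
  set p : Euc n × Euc n := (x, y) with hp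
  have hD : (0:ℝ) < (1 + ‖p‖) ^ (2*n) := by positivity
  have hE : (0:ℝ) < (1 + ‖x‖) ^ n * (1 + ‖y‖) ^ n := by positivity
  have hED : (1 + ‖x‖) ^ n * (1 + ‖y‖) ^ n ≤ (1 + ‖p‖) ^ (2*n) := by
    rw [two_mul, pow_add]
    have h1 : (1 + ‖x‖) ^ n ≤ (1 + ‖p‖) ^ n :=
      pow_le_pow_left₀ (by positivity) (by have := norm_fst_le p; simp [hp] at this ⊢) _
    have h2 : (1 + ‖y‖) ^ n ≤ (1 + ‖p‖) ^ n :=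
      pow_le_pow_left₀ (by positivity) (by have := norm_snd_le p; simp [hp] at this ⊢) _
    exact mul_le_mul h1 h2 (by positivity) (by positivity)
  have h3 : ‖φ p‖ ≤ C / ((1 + ‖p‖) ^ (2*n)) := by
    rw [le_div_iff₀ hD]; calc ‖φ p‖ * (1 + ‖p‖) ^ (2*n) = (1 + ‖p‖) ^ (2*n) * ‖φ p‖ := mul_comm _ _
      _ ≤ C := key
  have h4 : C / ((1 + ‖p‖) ^ (2*n)) ≤ C / ((1 + ‖x‖) ^ n * (1 + ‖y‖) ^ n) :=
    div_le_div_of_nonneg_left hC0 hE hED |>.trans_eq rfl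
  calc |φ (x, y)| = ‖φ p‖ := rfl
    _ ≤ C / ((1 + ‖x‖) ^ n * (1 + ‖y‖) ^ n) := h3.trans h4
    _ = C * (wv n x * wv n y) := by rw [wv, wv, div_eq_mul_inv, mul_inv]

lemma sph_measure_pos (hn : 3 ≤ n) :
    0 < (((volume : Measure (Euc n)).toSphere) univ).toReal := by
  haveI := euc_nontrivial hn
  rw [Measure.toSphere_apply_univ]
  have h1 : ((Module.finrank ℝ (Euc n) : ENNReal)) ≠ 0 := by
    rw [euc_dim]; exact_mod_cast (by omega : n - 1 ≠ 0)
  have h2 := measure_ball_pos (volume : Measure (Euc n)) 0 one_pos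
  have h3 : (volume : Measure (Euc n)) (ball (0:Euc n) 1) < ⊤ := measure_ball_lt_top
  apply ENNReal.toReal_pos
  · exact (ENNReal.mul_pos h1 h2.ne').ne'
  · exact ENNReal.mul_ne_top (by simp) h3.ne

lemma wv_mul_le_snd (a b : Euc n) : wv n a * wv n b ≤ wv n b := by
  have h1 := wv_le_one a; have h2 := wv_nonneg b
  nlinarith

lemma wv_mul_le_fst (a b : Euc n) : wv n a * wv n b ≤ wv n a := by
  have h1 := wv_le_one b; have h2 := wv_nonneg a
  nlinarith

lemma integrable_dom (hn : 3 ≤ n) {H : Euc n → ℝ}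
    (hm : AEStronglyMeasurable H (volume : Measure (Euc n))) (c : ℝ)
    (hb : ∀ v, |H v| ≤ c * wv n v) : Integrable H (volume : Measure (Euc n)) :=
  Integrable.mono' ((integrable_wv hn).const_mul c) hm
    (ae_of_all _ fun v => by simpa [Real.norm_eq_abs] using hb v)

lemma integrable_dom2 (hn : 3 ≤ n) {H : Euc n × Euc n → ℝ}
    (hm : AEStronglyMeasurable H ((volume : Measure (Euc n)).prod volume)) (c : ℝ)
    (hb : ∀ p, |H p| ≤ c * (wv n p.1 * wv n p.2)) :
    Integrable H ((volume : Measure (Euc n)).prod volume) :=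
  Integrable.mono' (((integrable_wv hn).mul_prod (integrable_wv hn)).const_mul c) hm
    (ae_of_all _ fun p => by simpa [Real.norm_eq_abs] using hb p)

lemma ae_snd_Ioi (n : ℕ) :
    ∀ᵐ p ∂((((volume : Measure (Euc n)).toSphere)).prod ((volume : Measure ℝ).restrict (Ioi 0))),
      p.2 ∈ Ioi (0:ℝ) := by
  rw [MeasureTheory.ae_iff]
  have hset : {p : (sphere (0:Euc n) 1) × ℝ | p.2 ∈ Ioi (0:ℝ)}ᶜ = univ ×ˢ (Ioi (0:ℝ))ᶜ := by
    ext p; simp [Set.mem_prod]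
  rw [show {p : (sphere (0:Euc n) 1) × ℝ | ¬ p.2 ∈ Ioi (0:ℝ)} = univ ×ˢ (Ioi (0:ℝ))ᶜ by ext p; simp [Set.mem_prod],
    Measure.prod_prod, Measure.restrict_apply measurableSet_Ioi.compl]
  simp [Set.Iic_inter_Ioi]

/-- Polar coordinates formula. -/
lemma polar_eq (hn : 3 ≤ n) (h : Euc n → ℝ) (hh : Integrable h) :
    ∫ y, h y =
      ∫ θ : sphere (0 : Euc n) 1, (∫ z in Ioi (0:ℝ), h (z • (θ : Euc n)) * z ^ (n - 2))
        ∂(volume : Measure (Euc n)).toSphere := by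
  haveI := euc_nontrivial hn
  set μ : Measure (Euc n) := volume with hμ
  have hdim : Module.finrank ℝ (Euc n) - 1 = n - 2 := by rw [euc_dim]; omega
  set g : sphere (0 : Euc n) 1 × Ioi (0:ℝ) → ℝ := fun p => h ((p.2 : ℝ) • (p.1 : Euc n)) with hg
  have key : ∀ x : ({0}ᶜ : Set (Euc n)), g (homeomorphUnitSphereProd (Euc n) x) = h x := by
    intro x
    have hx : (x : Euc n) ≠ 0 := x.2
    simp only [g, homeomorphUnitSphereProd_apply_snd_coe, homeomorphUnitSphereProd_apply_fst_coe]
    rw [smul_inv_smul₀ (norm_ne_zero_iff.2 hx)]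
  have hcomap : Integrable (fun x : ({0}ᶜ : Set (Euc n)) => h x) (μ.comap Subtype.val) := by
    have emb := MeasurableEmbedding.subtype_coe (measurableSet_singleton (0:Euc n)).compl
    rw [show (fun x : ({0}ᶜ : Set (Euc n)) => h x) = h ∘ Subtype.val from rfl,
      ← emb.integrable_map_iff,
      map_comap_subtype_coe (measurableSet_singleton (0:Euc n)).compl,
      MeasureTheory.restrict_compl_singleton]
    exact hh
  have hgint : Integrable g ((μ.toSphere).prod (Measure.volumeIoiPow (Module.finrank ℝ (Euc n) - 1))) := by
    rw [← (μ.measurePreserving_homeomorphUnitSphereProd).integrable_comp_emb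
      (Homeomorph.measurableEmbedding _)]
    exact hcomap.congr (ae_of_all _ fun x => (key x).symm)
  calc ∫ y, h y ∂μ = ∫ x : ({0}ᶜ : Set (Euc n)), h x ∂(μ.comap Subtype.val) := by
        rw [integral_subtype_comap (measurableSet_singleton _).compl,
          MeasureTheory.restrict_compl_singleton]
    _ = ∫ p, g p ∂((μ.toSphere).prod (Measure.volumeIoiPow (Module.finrank ℝ (Euc n) - 1))) := by
        rw [← (μ.measurePreserving_homeomorphUnitSphereProd).integral_comp
          (Homeomorph.measurableEmbedding _) g]
        exact integral_congr_ae (ae_of_all _ fun x => (key x).symm)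
    _ = ∫ θ : sphere (0 : Euc n) 1, ∫ r : Ioi (0:ℝ), g (θ, r)
          ∂(Measure.volumeIoiPow (Module.finrank ℝ (Euc n) - 1)) ∂μ.toSphere :=
        integral_prod g hgint
    _ = _ := by
        refine integral_congr_ae (ae_of_all _ fun θ => ?_)
        dsimp only
        rw [hdim, Measure.volumeIoiPow]
        have hmeas : Measurable fun r : Ioi (0:ℝ) => Real.toNNReal ((r:ℝ) ^ (n-2)) :=
          (measurable_subtype_coe.pow_const _).real_toNNReal
        have : (fun r : ℝ => ENNReal.ofReal (r ^ (n-2)))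
            = fun r : ℝ => ((Real.toNNReal (r ^ (n-2)) : NNReal) : ENNReal) := rfl
        rw [show (fun r : Ioi (0:ℝ) => ENNReal.ofReal ((r:ℝ) ^ (n-2)))
            = fun r : Ioi (0:ℝ) => ((Real.toNNReal ((r:ℝ) ^ (n-2)) : NNReal) : ENNReal) from rfl,
          integral_withDensity_eq_integral_smul hmeas,
          integral_subtype_comap measurableSet_Ioi
            (fun z : ℝ => Real.toNNReal (z ^ (n-2)) • h (z • (θ : Euc n)))]
        refine setIntegral_congr_fun measurableSet_Ioi fun z hz => ?_
        rw [NNReal.smul_def, Real.coe_toNNReal _ (pow_nonneg (le_of_lt hz) _), smul_eq_mul,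
          mul_comm]

set_option maxHeartbeats 2000000

/-- **The cone transform `𝒞` is self-adjoint** with respect to the weight `s^{n-2}`. -/
theorem coneTS_self_adjoint (n : ℕ) (hn : 3 ≤ n) (f g : Euc n × Euc n → ℝ)
    (hf : IsSr n f) (hg : IsSr n g)
    (F G : Euc n × ℝ → ℝ)
    (hF : ∀ (x y : Euc n), f (x, y) = F (x, ‖y‖))
    (hG : ∀ (x y : Euc n), g (x, y) = G (x, ‖y‖)) :
    ∫ u : Euc n, ∫ s in Set.Ioi (0 : ℝ), coneTS n F u s * G (u, s) * s ^ (n - 2) =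
    ∫ x : Euc n, ∫ z in Set.Ioi (0 : ℝ), F (x, z) * coneTS n G x z * z ^ (n - 2) := by
  classical
  obtain ⟨⟨fS, hfS⟩, -⟩ := hf
  obtain ⟨⟨gS, hgS⟩, -⟩ := hg
  have hfc : Continuous f := by rw [← hfS]; exact fS.continuous
  have hgc : Continuous g := by rw [← hgS]; exact gS.continuous
  obtain ⟨Cf, hCf0, hCf'⟩ := schwartz_decay n fS
  obtain ⟨Cg, hCg0, hCg'⟩ := schwartz_decay n gS
  have hCf : ∀ x y : Euc n, |f (x, y)| ≤ Cf * (wv n x * wv n y) := by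
    intro x y; rw [← hfS]; exact hCf' x y
  have hCg : ∀ x y : Euc n, |g (x, y)| ≤ Cg * (wv n x * wv n y) := by
    intro x y; rw [← hgS]; exact hCg' x y
  haveI := euc_nontrivial hn
  have h0 : 0 < n - 1 := by omega
  set e : Euc n := EuclideanSpace.single (⟨0, h0⟩ : Fin (n-1)) (1:ℝ) with he_def
  have he : ‖e‖ = 1 := by rw [he_def, EuclideanSpace.norm_single]; norm_num
  set ν := (volume : Measure (Euc n)).toSphere with hν
  set V : ℝ := (ν univ).toReal with hV
  have hV0 : 0 < V := sph_measure_pos hn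
  have hVne : V ≠ 0 := hV0.ne'
  have hnrm : ∀ (z : ℝ), 0 < z → ∀ θ : sphere (0:Euc n) 1, ‖z • (θ : Euc n)‖ = z := by
    intro z hz θ
    rw [norm_smul, Real.norm_eq_abs, _root_.abs_of_pos hz, mem_sphere_zero_iff_norm.mp θ.2, mul_one]
  have hnrm_e : ∀ z : ℝ, 0 ≤ z → ‖z • e‖ = z := fun z hz => by
    rw [norm_smul, Real.norm_eq_abs, _root_.abs_of_nonneg hz, he, mul_one]
  -- integrability of shifted sections
  have I1f : ∀ (u : Euc n) (s : ℝ), Integrable (fun y => f (u + s • y, y)) volume := by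
    intro u s
    refine integrable_dom hn (hfc.comp (by fun_prop) |>.aestronglyMeasurable) Cf fun y => ?_
    calc |f (u + s • y, y)| ≤ Cf * (wv n (u + s • y) * wv n y) := hCf _ _
      _ ≤ Cf * wv n y := mul_le_mul_of_nonneg_left (wv_mul_le_snd _ _) hCf0
  have I1g : ∀ (u : Euc n) (s : ℝ), Integrable (fun y => g (u + s • y, y)) volume := by
    intro u s
    refine integrable_dom hn (hgc.comp (by fun_prop) |>.aestronglyMeasurable) Cg fun y => ?_
    calc |g (u + s • y, y)| ≤ Cg * (wv n (u + s • y) * wv n y) := hCg _ _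
      _ ≤ Cg * wv n y := mul_le_mul_of_nonneg_left (wv_mul_le_snd _ _) hCg0
  -- uniform bounds on cone transforms
  set Iw : ℝ := ∫ y, wv n y ∂(volume : Measure (Euc n)) with hIw
  have hIw0 : 0 ≤ Iw := integral_nonneg wv_nonneg
  have Bf : ∀ u v : Euc n, |coneT n f (u, v)| ≤ Cf * Iw := by
    intro u v
    rw [coneT]
    dsimp only
    rw [← Real.norm_eq_abs, hIw, ← MeasureTheory.integral_const_mul]
    refine norm_integral_le_of_norm_le ((integrable_wv hn).const_mul Cf) (ae_of_all _ fun y => ?_)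
    rw [Real.norm_eq_abs]
    calc |f (u + ‖v‖ • y, y)| ≤ Cf * (wv n (u + ‖v‖ • y) * wv n y) := hCf _ _
      _ ≤ Cf * wv n y := mul_le_mul_of_nonneg_left (wv_mul_le_snd _ _) hCf0
  have Bg : ∀ u v : Euc n, |coneT n g (u, v)| ≤ Cg * Iw := by
    intro u v
    rw [coneT]
    dsimp only
    rw [← Real.norm_eq_abs, hIw, ← MeasureTheory.integral_const_mul]
    refine norm_integral_le_of_norm_le ((integrable_wv hn).const_mul Cg) (ae_of_all _ fun y => ?_)
    rw [Real.norm_eq_abs]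
    calc |g (u + ‖v‖ • y, y)| ≤ Cg * (wv n (u + ‖v‖ • y) * wv n y) := hCg _ _
      _ ≤ Cg * wv n y := mul_le_mul_of_nonneg_left (wv_mul_le_snd _ _) hCg0
  -- strong measurability of cone transforms
  have hSMf : StronglyMeasurable (coneT n f) := by
    have hc : Continuous (fun q : (Euc n × Euc n) × Euc n => f (q.1.1 + ‖q.1.2‖ • q.2, q.2)) :=
      hfc.comp (by fun_prop)
    exact hc.stronglyMeasurable.integral_prod_right'
  have hSMg : StronglyMeasurable (coneT n g) := by
    have hc : Continuous (fun q : (Euc n × Euc n) × Euc n => g (q.1.1 + ‖q.1.2‖ • q.2, q.2)) :=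
      hgc.comp (by fun_prop)
    exact hc.stronglyMeasurable.integral_prod_right'
  -- cone transform in polar form
  have aConef : ∀ u v : Euc n, coneT n f (u, v) = coneTS n F u ‖v‖ := by
    intro u v
    rw [coneT]
    dsimp only
    rw [polar_eq hn _ (I1f u ‖v‖), coneTS]
    refine integral_congr_ae (ae_of_all _ fun θ => ?_)
    refine setIntegral_congr_fun measurableSet_Ioi fun z hz => ?_
    have h1 : ‖v‖ • (z • (θ : Euc n)) = (z * ‖v‖) • (θ : Euc n) := by rw [smul_smul, mul_comm]
    rw [h1, hF, hnrm z hz θ]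
  have aConeg : ∀ u v : Euc n, coneT n g (u, v) = coneTS n G u ‖v‖ := by
    intro u v
    rw [coneT]
    dsimp only
    rw [polar_eq hn _ (I1g u ‖v‖), coneTS]
    refine integral_congr_ae (ae_of_all _ fun θ => ?_)
    refine setIntegral_congr_fun measurableSet_Ioi fun z hz => ?_
    have h1 : ‖v‖ • (z • (θ : Euc n)) = (z * ‖v‖) • (θ : Euc n) := by rw [smul_smul, mul_comm]
    rw [h1, hG, hnrm z hz θ]
  -- integrable sections of the products
  have I2 : ∀ u : Euc n, Integrable (fun v => coneT n f (u, v) * g (u, v)) volume := by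
    intro u
    refine integrable_dom hn ?_ ((Cf * Iw) * Cg) fun v => ?_
    · exact ((hSMf.comp_measurable measurable_prodMk_left).aestronglyMeasurable).mul
        (hgc.comp (by fun_prop) |>.aestronglyMeasurable)
    · calc |coneT n f (u, v) * g (u, v)| = |coneT n f (u, v)| * |g (u, v)| := _root_.abs_mul _ _
        _ ≤ (Cf * Iw) * (Cg * (wv n u * wv n v)) :=
            mul_le_mul (Bf u v) (hCg u v) (_root_.abs_nonneg _) (mul_nonneg hCf0 hIw0)
        _ = ((Cf * Iw) * Cg) * (wv n u * wv n v) := by ring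
        _ ≤ ((Cf * Iw) * Cg) * wv n v :=
            mul_le_mul_of_nonneg_left (wv_mul_le_snd _ _)
              (mul_nonneg (mul_nonneg hCf0 hIw0) hCg0)
  have I3 : ∀ x : Euc n, Integrable (fun y => f (x, y) * coneT n g (x, y)) volume := by
    intro x
    refine integrable_dom hn ?_ (Cf * (Cg * Iw)) fun y => ?_
    · exact ((hfc.comp (by fun_prop : Continuous fun y : Euc n => ((x, y) : Euc n × Euc n))).aestronglyMeasurable).mul
        ((hSMg.comp_measurable measurable_prodMk_left).aestronglyMeasurable)
    · calc |f (x, y) * coneT n g (x, y)| = |f (x, y)| * |coneT n g (x, y)| := _root_.abs_mul _ _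
        _ ≤ (Cf * (wv n x * wv n y)) * (Cg * Iw) :=
            mul_le_mul (hCf x y) (Bg x y) (_root_.abs_nonneg _)
              (mul_nonneg hCf0 (mul_nonneg (wv_nonneg _) (wv_nonneg _)))
        _ = (Cf * (Cg * Iw)) * (wv n x * wv n y) := by ring
        _ ≤ (Cf * (Cg * Iw)) * wv n y :=
            mul_le_mul_of_nonneg_left (wv_mul_le_snd _ _)
              (mul_nonneg hCf0 (mul_nonneg hCg0 hIw0))
  -- reduction of the weighted radial integrals to full-space integrals
  have L1 : ∀ u : Euc n,
      (∫ s in Ioi (0:ℝ), coneTS n F u s * G (u, s) * s ^ (n - 2)) =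
        V⁻¹ * ∫ v, coneT n f (u, v) * g (u, v) := by
    intro u
    have hp := polar_eq hn _ (I2 u)
    have hinner : ∀ θ : sphere (0:Euc n) 1,
        (∫ z in Ioi (0:ℝ), coneT n f (u, z • (θ : Euc n)) * g (u, z • (θ : Euc n)) * z ^ (n-2)) =
          ∫ s in Ioi (0:ℝ), coneTS n F u s * G (u, s) * s ^ (n - 2) := by
      intro θ
      refine setIntegral_congr_fun measurableSet_Ioi fun z hz => ?_
      rw [aConef, hnrm z hz θ, hG, hnrm z hz θ]
    have hp2 : (∫ v, coneT n f (u, v) * g (u, v)) =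
        V • (∫ s in Ioi (0:ℝ), coneTS n F u s * G (u, s) * s ^ (n - 2)) := by
      rw [hp]
      calc (∫ θ : sphere (0:Euc n) 1,
            (∫ z in Ioi (0:ℝ), coneT n f (u, z • (θ:Euc n)) * g (u, z • (θ:Euc n)) * z ^ (n-2)) ∂ν)
          = ∫ _θ : sphere (0:Euc n) 1,
            (∫ s in Ioi (0:ℝ), coneTS n F u s * G (u, s) * s ^ (n - 2)) ∂ν :=
            integral_congr_ae (ae_of_all _ hinner)
        _ = V • (∫ s in Ioi (0:ℝ), coneTS n F u s * G (u, s) * s ^ (n - 2)) := by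
            rw [integral_const, hV]; rfl
    rw [hp2, smul_eq_mul, ← mul_assoc, inv_mul_cancel₀ hVne, one_mul]
  have R1 : ∀ x : Euc n,
      (∫ z in Ioi (0:ℝ), F (x, z) * coneTS n G x z * z ^ (n - 2)) =
        V⁻¹ * ∫ y, f (x, y) * coneT n g (x, y) := by
    intro x
    have hp := polar_eq hn _ (I3 x)
    have hinner : ∀ ψ : sphere (0:Euc n) 1,
        (∫ r in Ioi (0:ℝ), f (x, r • (ψ : Euc n)) * coneT n g (x, r • (ψ : Euc n)) * r ^ (n-2)) =
          ∫ z in Ioi (0:ℝ), F (x, z) * coneTS n G x z * z ^ (n - 2) := by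
      intro ψ
      refine setIntegral_congr_fun measurableSet_Ioi fun r hr => ?_
      rw [aConeg, hnrm r hr ψ, hF, hnrm r hr ψ]
    have hp2 : (∫ y, f (x, y) * coneT n g (x, y)) =
        V • (∫ z in Ioi (0:ℝ), F (x, z) * coneTS n G x z * z ^ (n - 2)) := by
      rw [hp]
      calc (∫ ψ : sphere (0:Euc n) 1,
            (∫ r in Ioi (0:ℝ), f (x, r • (ψ:Euc n)) * coneT n g (x, r • (ψ:Euc n)) * r ^ (n-2)) ∂ν)
          = ∫ _ψ : sphere (0:Euc n) 1,
            (∫ z in Ioi (0:ℝ), F (x, z) * coneTS n G x z * z ^ (n - 2)) ∂ν :=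
            integral_congr_ae (ae_of_all _ hinner)
        _ = V • _ := by rw [integral_const, hV]; rfl
    rw [hp2, smul_eq_mul, ← mul_assoc, inv_mul_cancel₀ hVne, one_mul]
  have core : (∫ u, ∫ v, coneT n f (u, v) * g (u, v)) =
      ∫ x, ∫ y, f (x, y) * coneT n g (x, y) := by
    have I2prod : Integrable (fun p : Euc n × Euc n => coneT n f p * g p)
        ((volume : Measure (Euc n)).prod volume) := by
      refine integrable_dom2 hn
        (hSMf.aestronglyMeasurable.mul hgc.aestronglyMeasurable) ((Cf * Iw) * Cg) fun p => ?_
      calc |coneT n f p * g p| = |coneT n f (p.1, p.2)| * |g (p.1, p.2)| := _root_.abs_mul _ _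
        _ ≤ (Cf * Iw) * (Cg * (wv n p.1 * wv n p.2)) :=
            mul_le_mul (Bf p.1 p.2) (hCg p.1 p.2) (_root_.abs_nonneg _) (mul_nonneg hCf0 hIw0)
        _ = ((Cf * Iw) * Cg) * (wv n p.1 * wv n p.2) := by ring
    have c1 : (∫ u, ∫ v, coneT n f (u, v) * g (u, v)) =
        ∫ v, ∫ u, coneT n f (u, v) * g (u, v) :=
      integral_integral_swap I2prod
    have c2 : ∀ v : Euc n, (∫ u, coneT n f (u, v) * g (u, v)) =
        ∫ y, ∫ x, f (x, y) * g (x - ‖v‖ • y, v) := by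
      intro v
      have hI_uy : Integrable
          (Function.uncurry fun u y : Euc n => f (u + ‖v‖ • y, y) * g (u, v))
          ((volume : Measure (Euc n)).prod volume) := by
        refine integrable_dom2 hn
          ((hfc.comp (by fun_prop)).aestronglyMeasurable.mul
            ((hgc.comp (by fun_prop)).aestronglyMeasurable)) (Cf * Cg) fun p => ?_
        calc |f (p.1 + ‖v‖ • p.2, p.2) * g (p.1, v)|
            = |f (p.1 + ‖v‖ • p.2, p.2)| * |g (p.1, v)| := _root_.abs_mul _ _
          _ ≤ (Cf * wv n p.2) * (Cg * wv n p.1) := by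
              refine mul_le_mul ?_ ?_ (_root_.abs_nonneg _) (mul_nonneg hCf0 (wv_nonneg _))
              · exact (hCf _ _).trans (mul_le_mul_of_nonneg_left (wv_mul_le_snd _ _) hCf0)
              · exact (hCg _ _).trans (mul_le_mul_of_nonneg_left (wv_mul_le_fst _ _) hCg0)
          _ = (Cf * Cg) * (wv n p.1 * wv n p.2) := by ring
      calc (∫ u, coneT n f (u, v) * g (u, v))
          = ∫ u, ∫ y, f (u + ‖v‖ • y, y) * g (u, v) := by
            refine integral_congr_ae (ae_of_all _ fun u => ?_)
            simp only [coneT]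
            exact (MeasureTheory.integral_mul_const _ _).symm
        _ = ∫ y, ∫ u, f (u + ‖v‖ • y, y) * g (u, v) := integral_integral_swap hI_uy
        _ = ∫ y, ∫ x, f (x, y) * g (x - ‖v‖ • y, v) := by
            refine integral_congr_ae (ae_of_all _ fun y => ?_)
            dsimp only
            have ht := integral_add_right_eq_self (μ := (volume : Measure (Euc n)))
              (fun x => f (x, y) * g (x - ‖v‖ • y, v)) (‖v‖ • y)
            rw [← ht]
            refine integral_congr_ae (ae_of_all _ fun u => ?_)
            dsimp only
            rw [add_sub_cancel_right]
    have c3 : ∀ v : Euc n, (∫ y, ∫ x, f (x, y) * g (x - ‖v‖ • y, v)) =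
        ∫ x, ∫ y, f (x, y) * g (x - ‖v‖ • y, v) := by
      intro v
      refine integral_integral_swap ?_
      refine integrable_dom2 hn
        ((hfc.comp (by fun_prop)).aestronglyMeasurable.mul
          ((hgc.comp (by fun_prop)).aestronglyMeasurable)) (Cf * Cg) fun p => ?_
      calc |f (p.2, p.1) * g (p.2 - ‖v‖ • p.1, v)|
          = |f (p.2, p.1)| * |g (p.2 - ‖v‖ • p.1, v)| := _root_.abs_mul _ _
        _ ≤ (Cf * (wv n p.2 * wv n p.1)) * (Cg * 1) := by
            refine mul_le_mul (hCf _ _) ?_ (_root_.abs_nonneg _)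
              (mul_nonneg hCf0 (mul_nonneg (wv_nonneg _) (wv_nonneg _)))
            refine (hCg _ _).trans ?_
            refine mul_le_mul_of_nonneg_left ?_ hCg0
            calc wv n (p.2 - ‖v‖ • p.1) * wv n v ≤ wv n (p.2 - ‖v‖ • p.1) := wv_mul_le_fst _ _
              _ ≤ 1 := wv_le_one _
        _ = (Cf * Cg) * (wv n p.1 * wv n p.2) := by ring
    set R : Euc n × Euc n → ℝ := fun p => ∫ y, f (p.2, y) * g (p.2 - ‖p.1‖ • y, p.1) with hR
    have hRSM : StronglyMeasurable R := by
      have hc : Continuous (fun q : (Euc n × Euc n) × Euc n =>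
          f (q.1.2, q.2) * g (q.1.2 - ‖q.1.1‖ • q.2, q.1.1)) :=
        (hfc.comp (by fun_prop)).mul (hgc.comp (by fun_prop))
      exact hc.stronglyMeasurable.integral_prod_right'
    have hRb : ∀ p : Euc n × Euc n, |R p| ≤ ((Cf * Cg) * Iw) * (wv n p.1 * wv n p.2) := by
      intro p
      rw [hR]
      dsimp only
      rw [← Real.norm_eq_abs]
      calc ‖∫ y, f (p.2, y) * g (p.2 - ‖p.1‖ • y, p.1)‖
          ≤ ∫ y, ((Cf * Cg) * (wv n p.1 * wv n p.2)) * wv n y := by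
            refine norm_integral_le_of_norm_le ((integrable_wv hn).const_mul _)
              (ae_of_all _ fun y => ?_)
            rw [Real.norm_eq_abs, _root_.abs_mul]
            calc |f (p.2, y)| * |g (p.2 - ‖p.1‖ • y, p.1)|
                ≤ (Cf * (wv n p.2 * wv n y)) * (Cg * wv n p.1) := by
                  refine mul_le_mul (hCf _ _) ?_ (_root_.abs_nonneg _)
                    (mul_nonneg hCf0 (mul_nonneg (wv_nonneg _) (wv_nonneg _)))
                  exact (hCg _ _).trans (mul_le_mul_of_nonneg_left (wv_mul_le_snd _ _) hCg0)
              _ = ((Cf * Cg) * (wv n p.1 * wv n p.2)) * wv n y := by ring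
        _ = ((Cf * Cg) * (wv n p.1 * wv n p.2)) * Iw := by
            rw [MeasureTheory.integral_const_mul, hIw]
        _ = ((Cf * Cg) * Iw) * (wv n p.1 * wv n p.2) := by ring
    have I_R : Integrable R ((volume : Measure (Euc n)).prod volume) :=
      integrable_dom2 hn hRSM.aestronglyMeasurable _ hRb
    have c6 : (∫ v, ∫ x, ∫ y, f (x, y) * g (x - ‖v‖ • y, v)) =
        ∫ x, ∫ v, ∫ y, f (x, y) * g (x - ‖v‖ • y, v) :=
      integral_integral_swap I_R
    have c7 : ∀ x : Euc n, (∫ v, ∫ y, f (x, y) * g (x - ‖v‖ • y, v)) =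
        ∫ y, ∫ v, f (x, y) * g (x - ‖v‖ • y, v) := by
      intro x
      refine integral_integral_swap ?_
      refine integrable_dom2 hn
        ((hfc.comp (by fun_prop)).aestronglyMeasurable.mul
          ((hgc.comp (by fun_prop)).aestronglyMeasurable)) (Cf * Cg) fun p => ?_
      calc |f (x, p.2) * g (x - ‖p.1‖ • p.2, p.1)|
          = |f (x, p.2)| * |g (x - ‖p.1‖ • p.2, p.1)| := _root_.abs_mul _ _
        _ ≤ (Cf * wv n p.2) * (Cg * wv n p.1) := by
            refine mul_le_mul ?_ ?_ (_root_.abs_nonneg _) (mul_nonneg hCf0 (wv_nonneg _))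
            · exact (hCf _ _).trans (mul_le_mul_of_nonneg_left (wv_mul_le_snd _ _) hCf0)
            · exact (hCg _ _).trans (mul_le_mul_of_nonneg_left (wv_mul_le_snd _ _) hCg0)
        _ = (Cf * Cg) * (wv n p.1 * wv n p.2) := by ring
    have c8 : ∀ x : Euc n, (∫ y, ∫ v, f (x, y) * g (x - ‖v‖ • y, v)) =
        ∫ y, ∫ v, f (x, y) * g (x + ‖v‖ • y, v) := by
      intro x
      symm
      calc (∫ y, ∫ v, f (x, y) * g (x + ‖v‖ • y, v))
          = ∫ y, ∫ v, f (x, -y) * g (x - ‖v‖ • (-y), v) := by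
            refine integral_congr_ae (ae_of_all _ fun y => ?_)
            refine integral_congr_ae (ae_of_all _ fun v => ?_)
            dsimp only
            have h1 : f (x, -y) = f (x, y) := by rw [hF, hF, norm_neg]
            rw [h1, smul_neg, sub_neg_eq_add]
        _ = ∫ y, ∫ v, f (x, y) * g (x - ‖v‖ • y, v) :=
            integral_neg_eq_self (fun y => ∫ v, f (x, y) * g (x - ‖v‖ • y, v)) volume
    have c9 : ∀ x : Euc n, (∫ y, ∫ v, f (x, y) * g (x + ‖v‖ • y, v)) =
        ∫ y, f (x, y) * coneT n g (x, y) := by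
      intro x
      set W : Euc n → ℝ := fun y => ∫ t in Ioi (0:ℝ), g (x + t • y, t • e) * t ^ (n-2) with hW
      have hWSM : StronglyMeasurable W := by
        have hc : Continuous fun q : Euc n × ℝ => g (x + q.2 • q.1, q.2 • e) * q.2 ^ (n-2) :=
          (hgc.comp (by fun_prop)).mul (by fun_prop)
        exact hc.stronglyMeasurable.integral_prod_right'
      set BW : ℝ := Cg * ∫ t in Ioi (0:ℝ), wr t with hBW
      have hBW0 : 0 ≤ BW := mul_nonneg hCg0 (integral_nonneg fun t => wr_nonneg t)
      have hWb : ∀ y, |W y| ≤ BW := by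
        intro y
        rw [hW]
        dsimp only
        rw [← Real.norm_eq_abs, hBW, ← MeasureTheory.integral_const_mul]
        refine norm_integral_le_of_norm_le (integrable_wr.restrict.const_mul Cg) ?_
        filter_upwards [ae_restrict_mem measurableSet_Ioi] with t ht
        have ht0 : (0:ℝ) < t := ht
        rw [Real.norm_eq_abs, _root_.abs_mul]
        calc |g (x + t • y, t • e)| * |t ^ (n-2)|
            ≤ (Cg * wv n (t • e)) * t ^ (n-2) := by
              rw [_root_.abs_of_nonneg (pow_nonneg ht0.le _)]
              refine mul_le_mul_of_nonneg_right ?_ (pow_nonneg ht0.le _)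
              exact (hCg _ _).trans (mul_le_mul_of_nonneg_left (wv_mul_le_snd _ _) hCg0)
          _ ≤ Cg * wr t := by
              rw [mul_assoc]
              refine mul_le_mul_of_nonneg_left ?_ hCg0
              have hwv : wv n (t • e) = ((1 + t)^n)⁻¹ := by rw [wv, hnrm_e t ht0.le]
              rw [hwv]
              exact pow_weight_bound hn ht0
      have step1 : ∀ y : Euc n, (∫ v, g (x + ‖v‖ • y, v)) = V * W y := by
        intro y
        have hint : Integrable (fun v : Euc n => g (x + ‖v‖ • y, v)) volume := by
          refine integrable_dom hn ((hgc.comp (by fun_prop)).aestronglyMeasurable) Cg fun v => ?_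
          exact (hCg _ _).trans (mul_le_mul_of_nonneg_left (wv_mul_le_snd _ _) hCg0)
        rw [polar_eq hn _ hint]
        have hin : ∀ φ : sphere (0:Euc n) 1,
            (∫ z in Ioi (0:ℝ), g (x + ‖z • (φ:Euc n)‖ • y, z • (φ:Euc n)) * z ^ (n-2)) = W y := by
          intro φ
          rw [hW]
          refine setIntegral_congr_fun measurableSet_Ioi fun t ht => ?_
          have h2 : ‖t • (φ:Euc n)‖ = t := hnrm t ht φ
          rw [h2]
          congr 1
          rw [hG, hG, h2, hnrm_e t (le_of_lt ht)]
        refine (integral_congr_ae (ae_of_all _ hin)).trans ?_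
        rw [integral_const, smul_eq_mul, Measure.real, ← hV]
      have step2 : ∀ y : Euc n, coneT n g (x, y) =
          ∫ φ : sphere (0:Euc n) 1, W (‖y‖ • (φ : Euc n)) ∂ν := by
        intro y
        have hc0 : coneT n g (x, y) = ∫ v, g (x + ‖y‖ • v, v) := by simp only [coneT]
        rw [hc0, polar_eq hn _ (I1g x ‖y‖)]
        refine integral_congr_ae (ae_of_all _ fun φ => ?_)
        rw [hW]
        dsimp only
        refine setIntegral_congr_fun measurableSet_Ioi fun t ht => ?_
        have h2 : ‖t • (φ:Euc n)‖ = t := hnrm t ht φ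
        have h3 : ‖y‖ • (t • (φ:Euc n)) = t • (‖y‖ • (φ:Euc n)) := by
          rw [smul_smul, smul_smul, mul_comm]
        rw [h3]
        congr 1
        rw [hG, hG, h2, hnrm_e t ht.le]
      have hfsec : Continuous fun y : Euc n => f (x, y) := hfc.comp (by fun_prop)
      have hintA : Integrable (fun y => f (x, y) * W y) volume := by
        refine integrable_dom hn (hfsec.aestronglyMeasurable.mul hWSM.aestronglyMeasurable)
          (Cf * BW) fun y => ?_
        calc |f (x, y) * W y| = |f (x, y)| * |W y| := _root_.abs_mul _ _
          _ ≤ (Cf * wv n y) * BW :=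
              mul_le_mul ((hCf _ _).trans (mul_le_mul_of_nonneg_left (wv_mul_le_snd _ _) hCf0))
                (hWb y) (_root_.abs_nonneg _) (mul_nonneg hCf0 (wv_nonneg _))
          _ = (Cf * BW) * wv n y := by ring
      have hKb : ∀ y : Euc n, |∫ φ : sphere (0:Euc n) 1, W (‖y‖ • (φ:Euc n)) ∂ν| ≤ V * BW := by
        intro y
        rw [← Real.norm_eq_abs]
        calc ‖∫ φ : sphere (0:Euc n) 1, W (‖y‖ • (φ:Euc n)) ∂ν‖
            ≤ ∫ _φ : sphere (0:Euc n) 1, BW ∂ν :=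
            norm_integral_le_of_norm_le (integrable_const BW)
              (ae_of_all _ fun φ => by rw [Real.norm_eq_abs]; exact hWb _)
          _ = V * BW := by rw [integral_const, smul_eq_mul, Measure.real, ← hV]
      have hKSM : StronglyMeasurable fun y : Euc n =>
          ∫ φ : sphere (0:Euc n) 1, W (‖y‖ • (φ:Euc n)) ∂ν := by
        have hm : Measurable fun q : Euc n × sphere (0:Euc n) 1 => ‖q.1‖ • (q.2 : Euc n) :=
          ((continuous_norm.comp continuous_fst).smul
            (continuous_subtype_val.comp continuous_snd)).measurable
        exact (hWSM.comp_measurable hm).integral_prod_right'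
      have hintB : Integrable
          (fun y => f (x, y) * ∫ φ : sphere (0:Euc n) 1, W (‖y‖ • (φ:Euc n)) ∂ν) volume := by
        refine integrable_dom hn (hfsec.aestronglyMeasurable.mul hKSM.aestronglyMeasurable)
          (Cf * (V * BW)) fun y => ?_
        calc |f (x, y) * ∫ φ : sphere (0:Euc n) 1, W (‖y‖ • (φ:Euc n)) ∂ν|
            = |f (x, y)| * |∫ φ : sphere (0:Euc n) 1, W (‖y‖ • (φ:Euc n)) ∂ν| := _root_.abs_mul _ _
          _ ≤ (Cf * wv n y) * (V * BW) :=
              mul_le_mul ((hCf _ _).trans (mul_le_mul_of_nonneg_left (wv_mul_le_snd _ _) hCf0))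
                (hKb y) (_root_.abs_nonneg _) (mul_nonneg hCf0 (wv_nonneg _))
          _ = (Cf * (V * BW)) * wv n y := by ring
      set Q : sphere (0:Euc n) 1 × ℝ → ℝ :=
        fun q => f (x, q.2 • e) * W (q.2 • (q.1 : Euc n)) * q.2 ^ (n-2) with hQ
      have hQSM : StronglyMeasurable Q := by
        have h1 : StronglyMeasurable fun q : sphere (0:Euc n) 1 × ℝ => f (x, q.2 • e) :=
          (hfc.comp (by fun_prop)).stronglyMeasurable
        have h2 : StronglyMeasurable fun q : sphere (0:Euc n) 1 × ℝ => W (q.2 • (q.1 : Euc n)) := by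
          have hm : Measurable fun q : sphere (0:Euc n) 1 × ℝ => q.2 • (q.1 : Euc n) :=
            (continuous_snd.smul (continuous_subtype_val.comp continuous_fst)).measurable
          exact hWSM.comp_measurable hm
        have h3 : StronglyMeasurable fun q : sphere (0:Euc n) 1 × ℝ => q.2 ^ (n-2) :=
          (continuous_snd.pow _).stronglyMeasurable
        exact (h1.mul h2).mul h3
      have hQint : Integrable Q (ν.prod ((volume : Measure ℝ).restrict (Ioi 0))) := by
        have hbd : Integrable (fun q : sphere (0:Euc n) 1 × ℝ => (1:ℝ) * ((Cf * BW) * wr q.2))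
            (ν.prod ((volume : Measure ℝ).restrict (Ioi 0))) :=
          (integrable_const (1:ℝ)).mul_prod (integrable_wr.restrict.const_mul (Cf * BW))
        refine Integrable.mono' hbd hQSM.aestronglyMeasurable ?_
        have hae : ∀ᵐ q ∂(ν.prod ((volume : Measure ℝ).restrict (Ioi 0))), q.2 ∈ Ioi (0:ℝ) := by
          rw [hν]; exact ae_snd_Ioi n
        filter_upwards [hae] with q hq
        have hq0 : (0:ℝ) < q.2 := hq
        rw [Real.norm_eq_abs, hQ]
        dsimp only
        rw [_root_.abs_mul, _root_.abs_mul, one_mul]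
        calc |f (x, q.2 • e)| * |W (q.2 • (q.1:Euc n))| * |q.2 ^ (n-2)|
            ≤ (Cf * wv n (q.2 • e)) * BW * q.2 ^ (n-2) := by
              rw [_root_.abs_of_nonneg (pow_nonneg hq0.le _)]
              refine mul_le_mul_of_nonneg_right ?_ (pow_nonneg hq0.le _)
              exact mul_le_mul
                ((hCf _ _).trans (mul_le_mul_of_nonneg_left (wv_mul_le_snd _ _) hCf0))
                (hWb _) (_root_.abs_nonneg _) (mul_nonneg hCf0 (wv_nonneg _))
          _ ≤ (Cf * BW) * wr q.2 := by
              have hwv : wv n (q.2 • e) = ((1 + q.2)^n)⁻¹ := by rw [wv, hnrm_e _ hq0.le]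
              calc (Cf * wv n (q.2 • e)) * BW * q.2 ^ (n-2)
                  = (Cf * BW) * (wv n (q.2 • e) * q.2 ^ (n-2)) := by ring
                _ ≤ (Cf * BW) * wr q.2 := by
                    refine mul_le_mul_of_nonneg_left ?_ (mul_nonneg hCf0 hBW0)
                    rw [hwv]
                    exact pow_weight_bound hn hq0
      have hswap : (∫ θ : sphere (0:Euc n) 1, (∫ r in Ioi (0:ℝ), Q (θ, r)) ∂ν) =
          ∫ r in Ioi (0:ℝ), (∫ θ : sphere (0:Euc n) 1, Q (θ, r) ∂ν) :=
        integral_integral_swap hQint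
      have lhs1 : (∫ y, ∫ v, f (x, y) * g (x + ‖v‖ • y, v)) = V * ∫ y, f (x, y) * W y := by
        calc (∫ y, ∫ v, f (x, y) * g (x + ‖v‖ • y, v))
            = ∫ y, V * (f (x, y) * W y) := by
              refine integral_congr_ae (ae_of_all _ fun y => ?_)
              dsimp only
              rw [MeasureTheory.integral_const_mul, step1 y]
              ring
          _ = V * ∫ y, f (x, y) * W y := MeasureTheory.integral_const_mul _ _
      have hA : (∫ y, f (x, y) * W y) =
          ∫ θ : sphere (0:Euc n) 1, (∫ r in Ioi (0:ℝ), Q (θ, r)) ∂ν := by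
        rw [polar_eq hn _ hintA]
        refine integral_congr_ae (ae_of_all _ fun θ => ?_)
        refine setIntegral_congr_fun measurableSet_Ioi fun r hr => ?_
        rw [hQ]
        dsimp only
        congr 2
        rw [hF, hF, hnrm r hr θ, hnrm_e r hr.le]
      have hB : (∫ y, f (x, y) * ∫ φ : sphere (0:Euc n) 1, W (‖y‖ • (φ:Euc n)) ∂ν) =
          V * ∫ r in Ioi (0:ℝ), (∫ θ : sphere (0:Euc n) 1, Q (θ, r) ∂ν) := by
        rw [polar_eq hn _ hintB]
        have hin : ∀ ψ : sphere (0:Euc n) 1,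
            (∫ r in Ioi (0:ℝ),
              (f (x, r • (ψ:Euc n)) *
                ∫ φ : sphere (0:Euc n) 1, W (‖r • (ψ:Euc n)‖ • (φ:Euc n)) ∂ν) * r ^ (n-2)) =
              ∫ r in Ioi (0:ℝ), (∫ θ : sphere (0:Euc n) 1, Q (θ, r) ∂ν) := by
          intro ψ
          refine setIntegral_congr_fun measurableSet_Ioi fun r hr => ?_
          have hQev : (∫ θ : sphere (0:Euc n) 1, Q (θ, r) ∂ν) =
              (f (x, r • e) * ∫ φ : sphere (0:Euc n) 1, W (r • (φ:Euc n)) ∂ν) * r ^ (n-2) := by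
            calc (∫ θ : sphere (0:Euc n) 1, Q (θ, r) ∂ν)
                = ∫ θ : sphere (0:Euc n) 1, (f (x, r • e) * W (r • (θ:Euc n))) * r ^ (n-2) ∂ν := by
                  refine integral_congr_ae (ae_of_all _ fun θ => ?_)
                  rw [hQ]
              _ = (∫ θ : sphere (0:Euc n) 1, f (x, r • e) * W (r • (θ:Euc n)) ∂ν) * r ^ (n-2) :=
                  MeasureTheory.integral_mul_const _ _
              _ = (f (x, r • e) * ∫ φ : sphere (0:Euc n) 1, W (r • (φ:Euc n)) ∂ν) * r ^ (n-2) := by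
                  rw [MeasureTheory.integral_const_mul]
          rw [hnrm r hr ψ]
          have hf1 : f (x, r • (ψ:Euc n)) = f (x, r • e) := by
            rw [hF, hF, hnrm r hr ψ, hnrm_e r hr.le]
          rw [hf1, hQev]
        refine (integral_congr_ae (ae_of_all _ hin)).trans ?_
        rw [integral_const, smul_eq_mul, Measure.real, ← hV]
      calc (∫ y, ∫ v, f (x, y) * g (x + ‖v‖ • y, v))
          = V * ∫ y, f (x, y) * W y := lhs1
        _ = V * ∫ θ : sphere (0:Euc n) 1, (∫ r in Ioi (0:ℝ), Q (θ, r)) ∂ν := by rw [hA]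
        _ = V * ∫ r in Ioi (0:ℝ), (∫ θ : sphere (0:Euc n) 1, Q (θ, r) ∂ν) := by rw [hswap]
        _ = ∫ y, f (x, y) * ∫ φ : sphere (0:Euc n) 1, W (‖y‖ • (φ:Euc n)) ∂ν := hB.symm
        _ = ∫ y, f (x, y) * coneT n g (x, y) :=
            integral_congr_ae (ae_of_all _ fun y => by dsimp only; rw [step2 y])
    calc (∫ u, ∫ v, coneT n f (u, v) * g (u, v))
        = ∫ v, ∫ u, coneT n f (u, v) * g (u, v) := c1
      _ = ∫ v, ∫ x, ∫ y, f (x, y) * g (x - ‖v‖ • y, v) :=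
          integral_congr_ae (ae_of_all _ fun v => (c2 v).trans (c3 v))
      _ = ∫ x, ∫ v, ∫ y, f (x, y) * g (x - ‖v‖ • y, v) := c6
      _ = ∫ x, ∫ y, ∫ v, f (x, y) * g (x - ‖v‖ • y, v) :=
          integral_congr_ae (ae_of_all _ c7)
      _ = ∫ x, ∫ y, ∫ v, f (x, y) * g (x + ‖v‖ • y, v) :=
          integral_congr_ae (ae_of_all _ c8)
      _ = ∫ x, ∫ y, f (x, y) * coneT n g (x, y) :=
          integral_congr_ae (ae_of_all _ c9)
  calc ∫ u : Euc n, ∫ s in Ioi (0:ℝ), coneTS n F u s * G (u, s) * s ^ (n - 2)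
      = ∫ u : Euc n, V⁻¹ * ∫ v, coneT n f (u, v) * g (u, v) :=
        integral_congr_ae (ae_of_all _ L1)
    _ = V⁻¹ * ∫ u : Euc n, ∫ v, coneT n f (u, v) * g (u, v) := MeasureTheory.integral_const_mul _ _
    _ = V⁻¹ * ∫ x : Euc n, ∫ y, f (x, y) * coneT n g (x, y) := by rw [core]
    _ = ∫ x : Euc n, V⁻¹ * ∫ y, f (x, y) * coneT n g (x, y) :=
        (MeasureTheory.integral_const_mul _ _).symm
    _ = ∫ x : Euc n, ∫ z in Ioi (0:ℝ), F (x, z) * coneTS n G x z * z ^ (n - 2) :=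
        integral_congr_ae (ae_of_all _ fun x => (R1 x).symm)
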